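/- Let n ≥ 5 and let A ∈ 𝔽^{n×n} satisfy property R. Then for every S ⊆ [n] with |S| ≥ 5, the principal submatrix A[S] (viewed as a square matrix indexed by S) also satisfies property R. -/

import Mathlib

namespace PMAP

open Matrix

variable {K : Type*}

/-- The submatrix of a square matrix `A` with rows indexed by `S` and columns indexed by `T`. -/
def subm {m : Type*} (A : Matrix m m K) (S T : Finset m) : Matrix S T K :=
  Matrix.of fun i j => A i.1 j.1

/-- The principal minor of `A` indexed by `S`. -/
noncomputable def pminor {m : Type*} [DecidableEq m] [CommRing K]
    (A : Matrix m m K) (S : Finset m) : K :=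
  (subm A S S).det

/-- `A` and `B` are principal minor equivalent. -/
def PME {m : Type*} [DecidableEq m] [CommRing K] (A B : Matrix m m K) : Prop :=
  ∀ S : Finset m, S.Nonempty → pminor A S = pminor B S

/-- `A` and `B` are principal minor equivalent up to order `k`. -/
def PMEupto {m : Type*} [DecidableEq m] [CommRing K] (k : ℕ) (A B : Matrix m m K) : Prop :=
  ∀ S : Finset m, S.Nonempty → S.card ≤ k → pminor A S = pminor B S

/-- `X` is a cut of the principal submatrix `A[I]`. -/
def IsCutOn {m : Type*} [DecidableEq m] [Field K] (A : Matrix m m K) (I X : Finset m) : Prop :=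
  X ⊆ I ∧ 2 ≤ X.card ∧ X.card + 2 ≤ I.card ∧
    (subm A X (I \ X)).rank ≤ 1 ∧ (subm A (I \ X) X).rank ≤ 1

/-- `X` is a cut of `A`. -/
def IsCut {m : Type*} [Fintype m] [DecidableEq m] [Field K] (A : Matrix m m K)
    (X : Finset m) : Prop :=
  IsCutOn A Finset.univ X

/-- Property `R`: all off-diagonal entries are nonzero, and every rank-one `2×2`
submatrix `A[{i,j},{k,ℓ}]` (with `i,j,k,ℓ` distinct) extends to a rank-one submatrix
`A[X, Xᶜ]` with `i,j ∈ X` and `k,ℓ ∈ Xᶜ`. -/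
def PropR {m : Type*} [Fintype m] [DecidableEq m] [Field K] (A : Matrix m m K) : Prop :=
  (∀ i j : m, i ≠ j → A i j ≠ 0) ∧
    ∀ i j k l : m, i ≠ j → i ≠ k → i ≠ l → j ≠ k → j ≠ l → k ≠ l →
      (subm A {i, j} {k, l}).rank = 1 →
      ∃ X : Finset m, i ∈ X ∧ j ∈ X ∧ k ∉ X ∧ l ∉ X ∧ (subm A X Xᶜ).rank = 1

/-- `A` is diagonally similar to `B`: `B = D⁻¹ A D` for an invertible diagonal matrix `D`. -/
def DiagSim {m : Type*} [Field K] (A B : Matrix m m K) : Prop :=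
  ∃ D : m → K, (∀ i, D i ≠ 0) ∧ ∀ i j, B i j = (D i)⁻¹ * A i j * D j

/-- The set `D₁(A,B)` of indices `i` with `A[[n]∖{i}]` diagonally similar to `B[[n]∖{i}]`. -/
def D1 {n : ℕ} [Field K] (A B : Matrix (Fin n) (Fin n) K) : Set (Fin n) :=
  {i | DiagSim (subm A {i}ᶜ {i}ᶜ) (subm B {i}ᶜ {i}ᶜ)}

/-- The set `D₂(A,B)` of indices `i` with `A[[n]∖{i}]` diagonally similar to `B[[n]∖{i}]ᵀ`. -/
def D2 {n : ℕ} [Field K] (A B : Matrix (Fin n) (Fin n) K) : Set (Fin n) :=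
  {i | DiagSim (subm A {i}ᶜ {i}ᶜ) (subm B {i}ᶜ {i}ᶜ)ᵀ}

/-- The pair `{{i,j},{k,l}}` satisfies property `P` for `A`: there is a matrix `C`
principal minor equivalent to `A[{i,j,k,l}]` in which `{i,j}` is a cut. -/
def PropP {n : ℕ} [Field K] (A : Matrix (Fin n) (Fin n) K) (i j k l : Fin n) : Prop :=
  ∃ C : Matrix (Fin n) (Fin n) K,
    (∀ S : Finset (Fin n), S.Nonempty → S ⊆ {i, j, k, l} → pminor C S = pminor A S) ∧
    IsCutOn C {i, j, k, l} {i, j}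

/-- `A` is irreducible: it cannot be brought to block upper triangular form
by a simultaneous permutation of rows and columns. -/
def Irred {m : Type*} [Fintype m] [Zero K] (A : Matrix m m K) : Prop :=
  ∀ S : Finset m, S.Nonempty → S ≠ Finset.univ → ∃ i, i ∉ S ∧ ∃ j ∈ S, A i j ≠ 0


lemma rank_submatrix_le_row {K : Type*} [Field K] {m n m' : Type*}
    [Fintype m] [Fintype n] [Fintype m'] (A : Matrix m n K) (f : m' → m) :
    (A.submatrix f id).rank ≤ A.rank := by
  have h : (A.submatrix f id).mulVecLin =
      (LinearMap.funLeft K K f) ∘ₗ A.mulVecLin := by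
    have := Matrix.mulVecLin_submatrix f (Equiv.refl n) A
    have hid : LinearMap.funLeft K K (id : n → n) = LinearMap.id := LinearMap.ext fun g => rfl
    simpa [hid] using this
  rw [Matrix.rank, Matrix.rank, h, LinearMap.range_comp]
  exact Submodule.finrank_map_le _ _

lemma rank_submatrix_le' {K : Type*} [Field K] {m n m' n' : Type*}
    [Fintype m] [Fintype n] [Fintype m'] [Fintype n']
    (A : Matrix m n K) (f : m' → m) (g : n' → n) :
    (A.submatrix f g).rank ≤ A.rank := by
  have h1 : (A.submatrix f g) = ((A.submatrix id g).submatrix f id) := rfl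
  have h2 : (A.submatrix id g).rank ≤ A.rank := by
    have ht : (A.submatrix id g)ᵀ = Aᵀ.submatrix g id := rfl
    rw [← Matrix.rank_transpose (A.submatrix id g), ht, ← Matrix.rank_transpose A]
    exact rank_submatrix_le_row _ _
  calc (A.submatrix f g).rank ≤ (A.submatrix id g).rank := by
        rw [h1]; exact rank_submatrix_le_row _ _
    _ ≤ A.rank := h2

lemma one_le_rank_of_ne_zero {K : Type*} [Field K] {m n : Type*}
    [Fintype m] [Fintype n] (A : Matrix m n K) {i : m} {j : n}
    (h : A i j ≠ 0) : 1 ≤ A.rank := by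
  classical
  have h1 : (A.submatrix (fun _ : Fin 1 => i) (fun _ : Fin 1 => j)).rank = 1 := by
    have hu : IsUnit (A.submatrix (fun _ : Fin 1 => i) (fun _ : Fin 1 => j)) := by
      rw [Matrix.isUnit_iff_isUnit_det, Matrix.det_fin_one]
      exact (show A i j ≠ 0 from h).isUnit
    simpa using Matrix.rank_of_isUnit _ hu
  calc 1 = (A.submatrix (fun _ : Fin 1 => i) (fun _ : Fin 1 => j)).rank := h1.symm
    _ ≤ A.rank := rank_submatrix_le' _ _ _

/-- Property `R` is inherited by principal submatrices of order at
least 5. -/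
theorem propR_submatrix {n : ℕ} (hn : 5 ≤ n) {K : Type*} [Field K]
    (A : Matrix (Fin n) (Fin n) K) (hA : PropR A)
    (S : Finset (Fin n)) (hS : 5 ≤ S.card) :
    PropR (subm A S S) := by
  obtain ⟨h1, h2⟩ := hA
  constructor
  · intro i j hij
    exact h1 i.1 j.1 (fun h => hij (Subtype.ext h))
  · intro i j k l hij hik hil hjk hjl hkl hrank
    have vne : ∀ a b : {x // x ∈ S}, a ≠ b → (a : Fin n) ≠ (b : Fin n) :=
      fun a b hab h => hab (Subtype.ext h)
    -- transfer the 2×2 rank hypothesis to A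
    have hrank' : (subm A {(i : Fin n), (j : Fin n)} {(k : Fin n), (l : Fin n)}).rank = 1 := by
      have hle1 : (subm (subm A S S) {i, j} {k, l}).rank ≤
          (subm A {(i : Fin n), (j : Fin n)} {(k : Fin n), (l : Fin n)}).rank := by
        have heq : subm (subm A S S) {i, j} {k, l} =
            (subm A {(i : Fin n), (j : Fin n)} {(k : Fin n), (l : Fin n)}).submatrix
              (fun x => ⟨x.1.1, by
                rcases Finset.mem_insert.mp x.2 with h | h
                · exact Finset.mem_insert.mpr (Or.inl (by rw [h]))
                · exact Finset.mem_insert.mpr (Or.inr (by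
                    rw [Finset.mem_singleton] at h ⊢; rw [h]))⟩)
              (fun x => ⟨x.1.1, by
                rcases Finset.mem_insert.mp x.2 with h | h
                · exact Finset.mem_insert.mpr (Or.inl (by rw [h]))
                · exact Finset.mem_insert.mpr (Or.inr (by
                    rw [Finset.mem_singleton] at h ⊢; rw [h]))⟩) := rfl
        rw [heq]
        exact rank_submatrix_le' _ _ _
      have hle2 : (subm A {(i : Fin n), (j : Fin n)} {(k : Fin n), (l : Fin n)}).rank ≤
          (subm (subm A S S) {i, j} {k, l}).rank := by
        have heq : subm A {(i : Fin n), (j : Fin n)} {(k : Fin n), (l : Fin n)} =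
            (subm (subm A S S) {i, j} {k, l}).submatrix
              (fun x => if hx : x.1 = (i : Fin n) then
                  ⟨i, Finset.mem_insert_self _ _⟩
                else ⟨j, Finset.mem_insert.mpr (Or.inr (Finset.mem_singleton_self _))⟩)
              (fun x => if hx : x.1 = (k : Fin n) then
                  ⟨k, Finset.mem_insert_self _ _⟩
                else ⟨l, Finset.mem_insert.mpr (Or.inr (Finset.mem_singleton_self _))⟩) := by
          ext x y
          have hx : x.1 = (i : Fin n) ∨ x.1 = (j : Fin n) := by
            rcases Finset.mem_insert.mp x.2 with h | h
            · exact Or.inl h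
            · exact Or.inr (Finset.mem_singleton.mp h)
          have hy : y.1 = (k : Fin n) ∨ y.1 = (l : Fin n) := by
            rcases Finset.mem_insert.mp y.2 with h | h
            · exact Or.inl h
            · exact Or.inr (Finset.mem_singleton.mp h)
          simp only [subm, Matrix.submatrix_apply, Matrix.of_apply]
          rcases hx with hx | hx <;> rcases hy with hy | hy <;>
            simp [hx, hy, vne j i (Ne.symm hij), vne l k (Ne.symm hkl)]
        rw [heq]
        exact rank_submatrix_le' _ _ _
      omega
    obtain ⟨X, hiX, hjX, hkX, hlX, hXr⟩ := h2 i.1 j.1 k.1 l.1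
      (vne i j hij) (vne i k hik) (vne i l hil) (vne j k hjk) (vne j l hjl) (vne k l hkl)
      hrank'
    refine ⟨X.subtype (· ∈ S), Finset.mem_subtype.mpr hiX, Finset.mem_subtype.mpr hjX,
      fun h => hkX (Finset.mem_subtype.mp h), fun h => hlX (Finset.mem_subtype.mp h), ?_⟩
    set Y : Finset {x // x ∈ S} := X.subtype (· ∈ S) with hY
    have hle : (subm (subm A S S) Y Yᶜ).rank ≤ 1 := by
      have heq : subm (subm A S S) Y Yᶜ =
          (subm A X Xᶜ).submatrix
            (fun x => ⟨x.1.1, Finset.mem_subtype.mp x.2⟩)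
            (fun x => ⟨x.1.1, Finset.mem_compl.mpr
              (fun h => (Finset.mem_compl.mp x.2) (Finset.mem_subtype.mpr h))⟩) := rfl
      rw [heq, ← hXr]
      exact rank_submatrix_le' _ _ _
    have hge : 1 ≤ (subm (subm A S S) Y Yᶜ).rank := by
      refine one_le_rank_of_ne_zero (subm (subm A S S) Y Yᶜ)
        (i := ⟨i, Finset.mem_subtype.mpr hiX⟩)
        (j := ⟨k, Finset.mem_compl.mpr (fun h => hkX (Finset.mem_subtype.mp h))⟩) ?_
      exact h1 i.1 k.1 (vne i k hik)
    omega

end PMAP
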